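/- If h = 1, then C_K is a two-weight linear code with parameters [2nq^{m_1}, m+m_1, 2nq^{m_1−1}(q−1)]: the nonzero weight 2nq^{m_1−1}(q−1) occurs with frequency q^{m_1+m} − q^m and the weight 2nq^{m_1+m−1}(q−1)/(q^m−1) occurs with frequency q^m − 1. -/

import Mathlib

open scoped Classical

open Finset


lemma aux_fiber_card {F K : Type*} [Fintype F] [Fintype K] [DecidableEq K]
    [AddCommGroup F] [AddCommGroup K] (f : F →+ K) (hsurj : Function.Surjective f) (c : K) :
    ((Finset.univ.filter fun x : F => f x = c)).card * Fintype.card K = Fintype.card F := by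
  have hconst : ∀ d : K, (Finset.univ.filter fun x : F => f x = d).card
      = (Finset.univ.filter fun x : F => f x = 0).card := by
    intro d
    obtain ⟨x0, hx0⟩ := hsurj d
    apply Finset.card_bij' (fun x _ => x - x0) (fun x _ => x + x0)
    · intro x hx; simp only [mem_filter, mem_univ, true_and] at hx ⊢
      simp [map_sub, hx, hx0]
    · intro x hx; simp only [mem_filter, mem_univ, true_and] at hx ⊢
      simp [map_add, hx, hx0]
    · intro x _; simp
    · intro x _; simp
  have h2 : (Finset.univ : Finset F).card
      = ∑ d : K, (Finset.univ.filter fun x : F => f x = d).card :=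
    Finset.card_eq_sum_card_fiberwise (fun x _ => Finset.mem_univ (f x))
  simp_rw [hconst] at h2
  rw [Finset.sum_const, smul_eq_mul, Finset.card_univ] at h2
  rw [hconst c, mul_comm, h2, Finset.card_univ]


lemma aux_trace_fiber (K F : Type*) [Field K] [Fintype K] [DecidableEq K] [Field F] [Fintype F]
    [Algebra K F] (a : F) (ha : a ≠ 0) (c : K) :
    (Finset.univ.filter fun x : F => Algebra.trace K F (a * x) = c).card * Fintype.card K
      = Fintype.card F := by
  have : FiniteDimensional K F := Module.Finite.of_finite
  have hs : Function.Surjective (Algebra.trace K F) := Algebra.trace_surjective K F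
  let f : F →+ K := (Algebra.trace K F).toAddMonoidHom.comp (AddMonoidHom.mulLeft a)
  have hf : ∀ x, f x = Algebra.trace K F (a * x) := fun x => rfl
  have hsurj : Function.Surjective f := by
    intro d; obtain ⟨y, hy⟩ := hs d
    exact ⟨a⁻¹ * y, by rw [hf, mul_inv_cancel_left₀ ha, hy]⟩
  have := aux_fiber_card f hsurj c
  simpa [hf] using this


lemma aux_omega (q m : ℕ) (E : Type*) [Field E] [Fintype E]
    (hq3 : 3 ≤ q) (hm : 0 < m) (hc : Fintype.card E = q ^ m)
    (ω : E) (hω : ∀ x : E, x ≠ 0 → ∃ k : ℕ, x = ω ^ k) :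
    ω ≠ 0 ∧ orderOf ω = q ^ m - 1 := by
  have hq0 : 0 < q := by omega
  have hcard3 : 3 ≤ Fintype.card E := by
    rw [hc]
    calc 3 ≤ q := hq3
    _ = q ^ 1 := (pow_one q).symm
    _ ≤ q ^ m := Nat.pow_le_pow_right (by omega) hm
  have hω0 : ω ≠ 0 := by
    intro h0
    have hne : ((Finset.univ : Finset E) \ {0, 1}).Nonempty := by
      rw [← Finset.card_pos]
      have h1 : ({0, 1} : Finset E).card ≤ 2 := Finset.card_insert_le _ _ |>.trans (by simp)
      have := Finset.le_card_sdiff ({0, 1} : Finset E) Finset.univ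
      rw [Finset.card_univ] at this
      omega
    obtain ⟨x, hx⟩ := hne
    simp only [Finset.mem_sdiff, Finset.mem_univ, Finset.mem_insert, Finset.mem_singleton,
      true_and, not_or] at hx
    obtain ⟨k, hk⟩ := hω x hx.1
    rcases Nat.eq_zero_or_pos k with hk0 | hk0
    · exact hx.2 (by rw [hk, hk0, pow_zero])
    · exact hx.1 (by rw [hk, h0, zero_pow (by omega)])
  refine ⟨hω0, ?_⟩
  have hpow : ω ^ (q ^ m - 1) = 1 := by
    have := FiniteField.pow_card_sub_one_eq_one ω hω0
    rwa [hc] at this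
  have hdvd : orderOf ω ∣ q ^ m - 1 := orderOf_dvd_of_pow_eq_one hpow
  have hfin : IsOfFinOrder ω := isOfFinOrder_iff_pow_eq_one.2 ⟨q ^ m - 1, by omega, hpow⟩
  have hdpos : 0 < orderOf ω := hfin.orderOf_pos
  -- nonzero elements are among powers ω^i for i < orderOf ω
  have hsub : (Finset.univ.filter fun x : E => x ≠ 0) ⊆
      (Finset.range (orderOf ω)).image (ω ^ ·) := by
    intro x hx
    simp only [Finset.mem_filter, Finset.mem_univ, true_and] at hx
    obtain ⟨k, hk⟩ := hω x hx
    refine Finset.mem_image.2 ⟨k % orderOf ω, Finset.mem_range.2 (Nat.mod_lt _ hdpos), ?_⟩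
    rw [pow_mod_orderOf, hk]
  have hle : q ^ m - 1 ≤ orderOf ω := by
    have h1 : (Finset.univ.filter fun x : E => x ≠ 0).card = Fintype.card E - 1 := by
      rw [Finset.filter_ne', Finset.card_erase_of_mem (Finset.mem_univ 0), Finset.card_univ]
    have h2 := Finset.card_le_card hsub
    have h3 := Finset.card_image_le (s := Finset.range (orderOf ω)) (f := (ω ^ ·))
    rw [Finset.card_range] at h3
    rw [h1, hc] at h2
    omega
  exact Nat.le_antisymm (Nat.le_of_dvd (by omega) hdvd) hle


lemma aux_lam (q m : ℕ) (Kq E : Type*) [Field Kq] [Fintype Kq] [Field E] [Fintype E]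
    [Algebra Kq E] (hq : q = Fintype.card Kq) (hq3 : 3 ≤ q) (hm : 0 < m)
    (hc : Fintype.card E = q ^ m) (ω : E)
    (hord : ω ^ (q ^ m - 1) = 1) :
    ∃ lam : Kq, lam ≠ 0 ∧ algebraMap Kq E lam = ω ^ ((q ^ m - 1) / (q - 1)) := by
  set N := (q ^ m - 1) / (q - 1) with hN
  have hdvd : (q - 1) ∣ q ^ m - 1 := by
    have := Nat.sub_dvd_pow_sub_pow q 1 m
    simpa using this
  have hNmul : N * (q - 1) = q ^ m - 1 := Nat.div_mul_cancel hdvd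
  have hroot : (ω ^ N) ^ (q - 1) = 1 := by rw [← pow_mul, hNmul, hord]
  set T0 := (Finset.univ.filter fun u : Kq => u ≠ 0).image (algebraMap Kq E) with hT0
  have hinj : Function.Injective (algebraMap Kq E) := (algebraMap Kq E).injective
  have hcardT0 : T0.card = q - 1 := by
    rw [hT0, Finset.card_image_of_injective _ hinj, Finset.filter_ne',
      Finset.card_erase_of_mem (Finset.mem_univ 0), Finset.card_univ, hq]
  have hmemroots : ∀ z ∈ T0, z ^ (q - 1) = 1 := by
    intro z hz
    obtain ⟨u, hu, rfl⟩ := Finset.mem_image.1 hz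
    simp only [Finset.mem_filter, Finset.mem_univ, true_and] at hu
    rw [← map_pow]
    have : u ^ (q - 1) = 1 := by
      have := FiniteField.pow_card_sub_one_eq_one u hu
      rwa [← hq] at this
    rw [this, map_one]
  by_contra hcon
  push_neg at hcon
  have hnotmem : ω ^ N ∉ T0 := by
    intro hmem
    obtain ⟨u, hu, hueq⟩ := Finset.mem_image.1 hmem
    simp only [Finset.mem_filter, Finset.mem_univ, true_and] at hu
    exact hcon u hu hueq
  have hsub : insert (ω ^ N) T0 ⊆ (Polynomial.nthRoots (q - 1) (1 : E)).toFinset := by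
    intro z hz
    rw [Multiset.mem_toFinset, Polynomial.mem_nthRoots (by omega : 0 < q - 1)]
    rcases Finset.mem_insert.1 hz with rfl | hz
    · exact hroot
    · exact hmemroots z hz
  have hcard := Finset.card_le_card hsub
  rw [Finset.card_insert_of_notMem hnotmem, hcardT0] at hcard
  have h1 := (Polynomial.nthRoots (q - 1) (1 : E)).toFinset_card_le
  have h2 := Polynomial.card_nthRoots (q - 1) (1 : E)
  omega


lemma aux_periodic (P : ℕ → Prop) [DecidablePred P] (N : ℕ)
    (hP : ∀ i, P (i + N) ↔ P i) (t : ℕ) :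
    ((Finset.range (t * N)).filter P).card = t * ((Finset.range N).filter P).card := by
  have hshift : ∀ j i, P (j * N + i) ↔ P i := by
    intro j
    induction j with
    | zero => simp
    | succ j ih =>
      intro i
      have : (j + 1) * N + i = (j * N + i) + N := by ring
      rw [this, hP, ih]
  induction t with
  | zero => simp
  | succ t ih =>
    have hsplit : (t + 1) * N = t * N + N := by ring
    rw [hsplit, Finset.range_add, Finset.filter_union, Finset.card_union_of_disjoint, ih]
    · rw [Finset.filter_map, Finset.card_map]
      have : (Finset.range N).filter ((fun i => P i) ∘ (addLeftEmbedding (t * N))) =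
          (Finset.range N).filter P := by
        apply Finset.filter_congr
        intro i _
        simp only [Function.comp_apply, addLeftEmbedding_apply]
        exact hshift t i
      rw [this]
      ring
    · rw [Finset.disjoint_left]
      intro x hx hx2
      simp only [Finset.mem_filter, Finset.mem_range] at hx
      simp only [Finset.mem_filter, Finset.mem_map, Finset.mem_range,
        addLeftEmbedding_apply] at hx2
      obtain ⟨⟨i, _, hi⟩, _⟩ := hx2
      omega

lemma aux_countN (q m : ℕ) (Kq E : Type*) [Field Kq] [Fintype Kq] [Field E] [Fintype E]
    [Algebra Kq E] (hq : q = Fintype.card Kq) (hq3 : 3 ≤ q) (hm : 0 < m)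
    (hc : Fintype.card E = q ^ m) (ω : E) (hω0 : ω ≠ 0) (hord : orderOf ω = q ^ m - 1)
    (hω : ∀ x : E, x ≠ 0 → ∃ k : ℕ, x = ω ^ k)
    (b : E) (hb : b ≠ 0) :
    ((Finset.range ((q ^ m - 1) / (q - 1))).filter
        fun i => Algebra.trace Kq E (b * ω ^ i) = 0).card * (q - 1)
      = q ^ (m - 1) - 1 := by
  have hq0 : 0 < q := by omega
  set N := (q ^ m - 1) / (q - 1) with hN
  have hdvd : (q - 1) ∣ q ^ m - 1 := by simpa using Nat.sub_dvd_pow_sub_pow q 1 m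
  have hNmul : N * (q - 1) = q ^ m - 1 := Nat.div_mul_cancel hdvd
  have hqm1 : 1 < q ^ m := by
    calc 1 < q := by omega
    _ = q ^ 1 := (pow_one q).symm
    _ ≤ q ^ m := Nat.pow_le_pow_right (by omega) hm
  have hpow1 : ω ^ (q ^ m - 1) = 1 := by
    rw [← hord]; exact pow_orderOf_eq_one ω
  obtain ⟨lam, hlam0, hlam⟩ := aux_lam q m Kq E hq hq3 hm hc ω hpow1
  -- the full fiber over 0 has q^(m-1) elements
  have hfib : (Finset.univ.filter fun z : E => Algebra.trace Kq E (b * z) = 0).card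
      = q ^ (m - 1) := by
    have h1 := aux_trace_fiber Kq E b hb 0
    rw [hc, ← hq] at h1
    have h2 : q ^ m = q ^ (m - 1) * q := by
      conv_lhs => rw [show m = (m - 1) + 1 by omega]
      rw [pow_succ]
    rw [h2] at h1
    exact Nat.eq_of_mul_eq_mul_right hq0 h1
  -- S: nonzero elements with trace (b z) = 0
  set S := (Finset.univ.filter fun z : E => Algebra.trace Kq E (b * z) = 0).erase 0 with hS
  have hScard : S.card = q ^ (m - 1) - 1 := by
    rw [hS, Finset.card_erase_of_mem, hfib]
    simp
  -- bijection from filtered range N × nonzero Kq to S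
  set B := ((Finset.range N).filter fun i => Algebra.trace Kq E (b * ω ^ i) = 0) ×ˢ
      (Finset.univ.filter fun u : Kq => u ≠ 0) with hB
  have huval : orderOf (Units.mk0 ω hω0) = q ^ m - 1 := by
    rw [← orderOf_units]; exact hord
  have key : B.card = S.card := by
    apply Finset.card_bij (fun p _ => ω ^ p.1 * algebraMap Kq E p.2)
    · rintro ⟨i, u⟩ hp
      simp only [hB, Finset.mem_product, Finset.mem_filter, Finset.mem_range, Finset.mem_univ,
        true_and] at hp
      obtain ⟨⟨hi, htr⟩, hu⟩ := hp
      rw [hS, Finset.mem_erase]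
      constructor
      · exact mul_ne_zero (pow_ne_zero _ hω0) (fun h => hu ((algebraMap Kq E).injective (by simp [h])))
      · simp only [Finset.mem_filter, Finset.mem_univ, true_and]
        have : b * (ω ^ i * algebraMap Kq E u) = algebraMap Kq E u * (b * ω ^ i) := by ring
        rw [this, ← Algebra.smul_def, map_smul, htr, smul_zero]
    · rintro ⟨i, u⟩ hp ⟨i', u'⟩ hp' heq
      simp only [hB, Finset.mem_product, Finset.mem_filter, Finset.mem_range, Finset.mem_univ,
        true_and] at hp hp'
      obtain ⟨⟨hi, _⟩, hu⟩ := hp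
      obtain ⟨⟨hi', _⟩, hu'⟩ := hp'
      have hu1 : (algebraMap Kq E u) ^ (q - 1) = 1 := by
        rw [← map_pow]
        have : u ^ (q - 1) = 1 := by
          have := FiniteField.pow_card_sub_one_eq_one u hu
          rwa [← hq] at this
        rw [this, map_one]
      have hu1' : (algebraMap Kq E u') ^ (q - 1) = 1 := by
        rw [← map_pow]
        have : u' ^ (q - 1) = 1 := by
          have := FiniteField.pow_card_sub_one_eq_one u' hu'
          rwa [← hq] at this
        rw [this, map_one]
      have hpow : ω ^ (i * (q - 1)) = ω ^ (i' * (q - 1)) := by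
        have := congrArg (· ^ (q - 1)) heq
        simp only [mul_pow, hu1, hu1', mul_one, ← pow_mul] at this
        exact this
      have hii' : i = i' := by
        have hmod : i * (q - 1) ≡ i' * (q - 1) [MOD q ^ m - 1] := by
          have : (Units.mk0 ω hω0) ^ (i * (q - 1)) = (Units.mk0 ω hω0) ^ (i' * (q - 1)) := by
            ext; simpa using hpow
          have := (pow_eq_pow_iff_modEq).1 this
          rwa [huval] at this
        rw [← hNmul] at hmod
        have hmod2 : i ≡ i' [MOD N] := Nat.ModEq.mul_right_cancel' (by omega) hmod
        have := Nat.ModEq.eq_of_lt_of_lt hmod2 hi hi'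
        exact this
      subst hii'
      have : algebraMap Kq E u = algebraMap Kq E u' :=
        mul_left_cancel₀ (pow_ne_zero _ hω0) heq
      have : u = u' := (algebraMap Kq E).injective this
      simp [this]
    · -- surjectivity
      intro z hz
      rw [hS, Finset.mem_erase, Finset.mem_filter] at hz
      obtain ⟨hz0, _, htr⟩ := hz
      obtain ⟨k, hk⟩ := hω z hz0
      have hk' : z = ω ^ (k % (q ^ m - 1)) := by
        rw [hk, ← hord, pow_mod_orderOf]
      set k' := k % (q ^ m - 1) with hk'def
      have hklt : k' < q ^ m - 1 := Nat.mod_lt _ (by omega)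
      have hNpos : 0 < N := by
        rcases Nat.eq_zero_or_pos N with h | h
        · rw [h] at hNmul; omega
        · exact h
      set i := k' % N with hidef
      set j := k' / N with hjdef
      have hilt : i < N := Nat.mod_lt _ hNpos
      have hdecomp : k' = N * j + i := (Nat.div_add_mod k' N).symm
      have hz2 : z = ω ^ i * algebraMap Kq E (lam ^ j) := by
        rw [hk', hdecomp, pow_add, map_pow, hlam, ← pow_mul, mul_comm N j, mul_comm]
      have hlamj : lam ^ j ≠ 0 := pow_ne_zero _ hlam0
      have htri : Algebra.trace Kq E (b * ω ^ i) = 0 := by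
        have : b * z = algebraMap Kq E (lam ^ j) * (b * ω ^ i) := by rw [hz2]; ring
        rw [this, ← Algebra.smul_def, map_smul, smul_eq_mul] at htr
        exact (mul_eq_zero.1 htr).resolve_left hlamj
      refine ⟨(i, lam ^ j), ?_, hz2.symm⟩
      simp only [hB, Finset.mem_product, Finset.mem_filter, Finset.mem_range, Finset.mem_univ,
        true_and]
      exact ⟨⟨hilt, htri⟩, hlamj⟩
  rw [hScard] at key
  rw [← key, hB, Finset.card_product]
  congr 1
  rw [Finset.filter_ne', Finset.card_erase_of_mem (Finset.mem_univ 0), Finset.card_univ, hq]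

/-- The codeword `c(a,b)` of the code `C_K` with `K = F_{q^{m_1}} × D`,
`D = {ω^{hi} : 0 ≤ i < n}`:
`c(a,b) = (Tr^{m_1}_1(ax)+Tr^m_1(by) | Tr^{m_1}_1(ax)+Tr^m_1((a+b)y))_{(x,y) ∈ K}`,
indexed by `(x, i, half) ∈ E1 × Fin n × Bool` where `y = ω^{hi}`. -/
noncomputable def cword (Kq E1 E : Type*) [Field Kq] [Field E1] [Field E]
    [Algebra Kq E1] [Algebra Kq E] [Algebra E1 E]
    (ω : E) (h n : ℕ) (a : E1) (b : E) : E1 × Fin n × Bool → Kq :=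
  fun z =>
    if z.2.2 then
      Algebra.trace Kq E1 (a * z.1) + Algebra.trace Kq E (b * ω ^ (h * (z.2.1 : ℕ)))
    else
      Algebra.trace Kq E1 (a * z.1) +
        Algebra.trace Kq E ((algebraMap E1 E a + b) * ω ^ (h * (z.2.1 : ℕ)))

/-- If `h = 1`, `C_K` is a `[2nq^{m_1}, m+m_1, 2nq^{m_1−1}(q−1)]` two-weight linear
code: the weight `2nq^{m_1−1}(q−1)` occurs with frequency `q^{m_1+m} − q^m` and the
weight `2nq^{m_1+m−1}(q−1)/(q^m−1)` with frequency `q^m − 1`. -/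
theorem stmt10 (q m m1 n : ℕ) (Kq E1 E : Type*)
    [Field Kq] [Fintype Kq] [DecidableEq Kq]
    [Field E1] [Fintype E1] [Field E] [Fintype E]
    [Algebra Kq E1] [Algebra Kq E] [Algebra E1 E] [IsScalarTower Kq E1 E]
    (hq : q = Fintype.card Kq) (hqodd : Odd q)
    (hm1 : m1 ∣ m) (hc1 : Fintype.card E1 = q ^ m1) (hc : Fintype.card E = q ^ m)
    (ω : E) (hω : ∀ x : E, x ≠ 0 → ∃ k : ℕ, x = ω ^ k)
    (hn0 : 0 < n) (hn : (q ^ m - 1) / (q - 1) ∣ n) :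
    Fintype.card (E1 × Fin n × Bool) = 2 * n * q ^ m1 ∧
    Function.Injective (fun ab : E1 × E => cword Kq E1 E ω 1 n ab.1 ab.2) ∧
    (∀ a : E1, ∀ b : E, (a, b) ≠ (0, 0) →
      2 * n * q ^ (m1 - 1) * (q - 1) ≤ hammingNorm (cword Kq E1 E ω 1 n a b)) ∧
    (Finset.univ.filter fun ab : E1 × E =>
        hammingNorm (cword Kq E1 E ω 1 n ab.1 ab.2) =
          2 * n * q ^ (m1 - 1) * (q - 1)).card = q ^ (m1 + m) - q ^ m ∧
    (Finset.univ.filter fun ab : E1 × E =>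
        (hammingNorm (cword Kq E1 E ω 1 n ab.1 ab.2) : ℚ) =
          2 * n * (q : ℚ) ^ (m1 + m - 1) * ((q : ℚ) - 1) / ((q : ℚ) ^ m - 1)).card =
      q ^ m - 1 := by
  classical
  have hq2 : 2 ≤ q := by rw [hq]; exact Fintype.one_lt_card
  have hq3 : 3 ≤ q := by rcases hqodd with ⟨k, hk⟩; omega
  have hq0 : 0 < q := by omega
  have hm1pos : 0 < m1 := by
    rcases Nat.eq_zero_or_pos m1 with h | h
    · have h1 : 1 < Fintype.card E1 := Fintype.one_lt_card
      rw [hc1, h, pow_zero] at h1; omega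
    · exact h
  have hmpos : 0 < m := by
    rcases Nat.eq_zero_or_pos m with h | h
    · have h1 : 1 < Fintype.card E := Fintype.one_lt_card
      rw [hc, h, pow_zero] at h1; omega
    · exact h
  have hqm1 : 1 < q ^ m := by
    calc 1 < q := by omega
    _ = q ^ 1 := (pow_one q).symm
    _ ≤ q ^ m := Nat.pow_le_pow_right (by omega) hmpos
  have hcardE1 : 1 < q ^ m1 := by
    calc 1 < q := by omega
    _ = q ^ 1 := (pow_one q).symm
    _ ≤ q ^ m1 := Nat.pow_le_pow_right (by omega) hm1pos
  -- powers of q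
  have hqm1pow : q ^ m1 = q ^ (m1 - 1) * q := by
    conv_lhs => rw [show m1 = (m1 - 1) + 1 by omega]
    rw [pow_succ]
  have hqmpow : q ^ m = q ^ (m - 1) * q := by
    conv_lhs => rw [show m = (m - 1) + 1 by omega]
    rw [pow_succ]
  have hqm1m : q ^ (m1 - 1) * q ^ m = q ^ (m1 + m - 1) := by
    rw [← pow_add]; congr 1; omega
  have hqm1m' : q ^ m1 * q ^ (m - 1) = q ^ (m1 + m - 1) := by
    rw [← pow_add]; congr 1; omega
  -- ω facts (placeholders for aux lemmas)
  obtain ⟨hω0, hord⟩ := aux_omega q m E hq3 hmpos hc ω hω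
  have hpow1 : ω ^ (q ^ m - 1) = 1 := by rw [← hord]; exact pow_orderOf_eq_one ω
  set N := (q ^ m - 1) / (q - 1) with hNdef
  have hdvdq : (q - 1) ∣ q ^ m - 1 := by simpa using Nat.sub_dvd_pow_sub_pow q 1 m
  have hNmul : N * (q - 1) = q ^ m - 1 := Nat.div_mul_cancel hdvdq
  have hNpos : 0 < N := by
    rcases Nat.eq_zero_or_pos N with h | h
    · rw [h, zero_mul] at hNmul; omega
    · exact h
  obtain ⟨t, htn⟩ := hn
  have ht0 : 0 < t := by
    rcases Nat.eq_zero_or_pos t with h | h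
    · rw [h, mul_zero] at htn; omega
    · exact h
  obtain ⟨lam, hlam0, hlam⟩ := aux_lam q m Kq E hq hq3 hmpos hc ω hpow1
  rw [← hNdef] at hlam
  -- fiber counts over E1
  have hfib1 : ∀ (a : E1), a ≠ 0 → ∀ c : Kq,
      (Finset.univ.filter fun x : E1 => Algebra.trace Kq E1 (a * x) = c).card = q ^ (m1 - 1) := by
    intro a ha c
    have h1 : (Finset.univ.filter fun x : E1 => Algebra.trace Kq E1 (a * x) = c).card *
        Fintype.card Kq = Fintype.card E1 := aux_trace_fiber Kq E1 a ha c
    rw [hc1, ← hq, hqm1pow] at h1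
    exact Nat.eq_of_mul_eq_mul_right hq0 h1
  -- periodicity of trace zero in the exponent
  have hper : ∀ b : E, ∀ i : ℕ,
      (Algebra.trace Kq E (b * ω ^ (i + N)) = 0) ↔ (Algebra.trace Kq E (b * ω ^ i) = 0) := by
    intro b i
    have h1 : b * ω ^ (i + N) = algebraMap Kq E lam * (b * ω ^ i) := by
      rw [pow_add, ← hlam]; ring
    rw [h1, ← Algebra.smul_def, map_smul, smul_eq_mul, mul_eq_zero]
    simp [hlam0]
  -- cardinality of index set
  have hcard_idx : Fintype.card (E1 × Fin n × Bool) = 2 * n * q ^ m1 := by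
    simp [Fintype.card_prod, hc1]; ring
  -- hammingNorm as complement of zero count
  have hnorm : ∀ f : E1 × Fin n × Bool → Kq,
      hammingNorm f + (Finset.univ.filter fun z => f z = 0).card =
        Fintype.card (E1 × Fin n × Bool) := by
    intro f
    have h := Finset.card_filter_add_card_filter_not
      (s := (Finset.univ : Finset (E1 × Fin n × Bool))) (p := fun z => f z = 0)
    have h2 : hammingNorm f = (Finset.univ.filter fun z => ¬ (f z = 0)).card := by
      simp [hammingNorm]
    rw [h2, Finset.card_univ] at *
    omega
  -- zero-count and weight for a ≠ 0
  have hW1 : ∀ (a : E1) (b : E), a ≠ 0 →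
      hammingNorm (cword Kq E1 E ω 1 n a b) = 2 * n * q ^ (m1 - 1) * (q - 1) := by
    intro a b ha
    set f := cword Kq E1 E ω 1 n a b with hf
    set C : Fin n × Bool → Kq := fun y =>
      if y.2 then Algebra.trace Kq E (b * ω ^ (y.1 : ℕ))
      else Algebra.trace Kq E ((algebraMap E1 E a + b) * ω ^ (y.1 : ℕ)) with hC
    have hcw : ∀ (x : E1) (y : Fin n × Bool),
        f (x, y) = Algebra.trace Kq E1 (a * x) + C y := by
      rintro x ⟨i, half⟩
      cases half <;> simp [hf, cword, hC]
    have hZ : (Finset.univ.filter fun z : E1 × Fin n × Bool => f z = 0).card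
        = (n * 2) * q ^ (m1 - 1) := by
      rw [Finset.card_filter, Fintype.sum_prod_type, Finset.sum_comm]
      have hinner : ∀ y : Fin n × Bool,
          (∑ x : E1, if f (x, y) = 0 then 1 else 0) = q ^ (m1 - 1) := by
        intro y
        rw [← Finset.card_filter]
        have heq : (Finset.univ.filter fun x : E1 => f (x, y) = 0)
            = (Finset.univ.filter fun x : E1 => Algebra.trace Kq E1 (a * x) = -(C y)) := by
          apply Finset.filter_congr
          intro x _
          rw [hcw]
          exact add_eq_zero_iff_eq_neg
        rw [heq, hfib1 a ha (-(C y))]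
      rw [Finset.sum_congr rfl (fun y _ => hinner y)]
      simp [Finset.card_univ, mul_comm]
    have h1 := hnorm f
    rw [hZ, hcard_idx] at h1
    have h2 : 2 * n * q ^ m1 = (n * 2) * q ^ (m1 - 1) * q := by rw [hqm1pow]; ring
    have h3 : 2 * n * q ^ (m1 - 1) * (q - 1)
        = (n * 2) * q ^ (m1 - 1) * q - (n * 2) * q ^ (m1 - 1) := by
      rw [Nat.mul_sub]; ring_nf
    omega
  -- weight for a = 0, b ≠ 0
  have hW2 : ∀ b : E, b ≠ 0 →
      hammingNorm (cword Kq E1 E ω 1 n 0 b) = 2 * t * q ^ (m1 + m - 1) := by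
    intro b hb
    set f := cword Kq E1 E ω 1 n 0 b with hf
    have hcw : ∀ (x : E1) (y : Fin n × Bool),
        f (x, y) = Algebra.trace Kq E (b * ω ^ (y.1 : ℕ)) := by
      rintro x ⟨i, half⟩
      cases half <;> simp [hf, cword]
    set Z1 := ((Finset.range N).filter
        fun i => Algebra.trace Kq E (b * ω ^ i) = 0).card with hZ1def
    have hZ1q : Z1 * (q - 1) = q ^ (m - 1) - 1 := by
      have h := aux_countN q m Kq E hq hq3 hmpos hc ω hω0 hord hω b hb
      rw [← hNdef] at h
      rw [hZ1def]
      convert h using 3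
      congr!
    have hZ1leN : Z1 ≤ N := le_trans (Finset.card_filter_le _ _) (le_of_eq (Finset.card_range N))
    have hq1pos : 0 < q - 1 := by omega
    have hqm1le : q ^ (m - 1) ≤ q ^ m := Nat.pow_le_pow_right (by omega) (by omega)
    have hqm1pos : 0 < q ^ (m - 1) := Nat.pow_pos hq0
    have hNZ : N - Z1 = q ^ (m - 1) := by
      apply Nat.eq_of_mul_eq_mul_right hq1pos
      rw [Nat.sub_mul, hNmul, hZ1q]
      have h1 : q ^ m - q ^ (m - 1) = q ^ (m - 1) * (q - 1) := by
        rw [Nat.mul_sub, mul_one, ← hqmpow]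
      omega
    -- count of i < n with trace zero
    have hcount : ((Finset.range n).filter
        fun i => Algebra.trace Kq E (b * ω ^ i) = 0).card = t * Z1 := by
      rw [htn, mul_comm N t]
      exact aux_periodic _ N (hper b) t
    -- total zero count
    have hZ : (Finset.univ.filter fun z : E1 × Fin n × Bool => f z = 0).card
        = q ^ m1 * (2 * (t * Z1)) := by
      rw [Finset.card_filter, Fintype.sum_prod_type]
      have hx : ∀ x : E1, (∑ y : Fin n × Bool, if f (x, y) = 0 then (1:ℕ) else 0)
          = 2 * (t * Z1) := by
        intro x
        rw [Fintype.sum_prod_type]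
        have hb2 : ∀ i : Fin n, (∑ half : Bool, if f (x, (i, half)) = 0 then (1:ℕ) else 0)
            = 2 * (if Algebra.trace Kq E (b * ω ^ (i : ℕ)) = 0 then (1:ℕ) else 0) := by
          intro i
          rw [Fintype.sum_bool]
          rw [hcw x (i, true), hcw x (i, false)]
          ring
        rw [Finset.sum_congr rfl (fun i _ => hb2 i), ← Finset.mul_sum]
        congr 1
        rw [Fin.sum_univ_eq_sum_range (fun i => if Algebra.trace Kq E (b * ω ^ i) = 0
          then (1:ℕ) else 0) n, ← Finset.card_filter, hcount]
      rw [Finset.sum_congr rfl (fun x _ => hx x), Finset.sum_const, Finset.card_univ, hc1,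
        smul_eq_mul]
    have h1 := hnorm f
    rw [hZ, hcard_idx] at h1
    have h2 : 2 * n * q ^ m1 = q ^ m1 * (2 * (t * N)) := by rw [htn]; ring
    have h3 : 2 * t * q ^ (m1 + m - 1) = q ^ m1 * (2 * (t * N)) - q ^ m1 * (2 * (t * Z1)) := by
      rw [← Nat.mul_sub, ← Nat.mul_sub, ← Nat.mul_sub, hNZ, ← hqm1m']
      ring
    omega
  -- weight of the zero codeword
  have hW0 : hammingNorm (cword Kq E1 E ω 1 n (0 : E1) (0 : E)) = 0 := by
    have hz : cword Kq E1 E ω 1 n (0 : E1) (0 : E) = fun _ => (0 : Kq) := by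
      funext z
      rcases z with ⟨x, i, half⟩
      cases half <;> simp [cword]
    rw [hz]
    simp [hammingNorm]
  -- linearity of cword
  have hsubl : ∀ (a a' : E1) (b b' : E) (z : E1 × Fin n × Bool),
      cword Kq E1 E ω 1 n (a - a') (b - b') z
        = cword Kq E1 E ω 1 n a b z - cword Kq E1 E ω 1 n a' b' z := by
    intro a a' b b' z
    rcases z with ⟨x, i, half⟩
    cases half <;>
      simp only [cword, if_true, if_false, Bool.false_eq_true, map_sub, sub_mul,
        sub_add_sub_comm] <;>
    · rw [sub_mul, map_sub]
      ring
  -- strict inequality between the two weights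
  have hlt : 2 * n * q ^ (m1 - 1) * (q - 1) < 2 * t * q ^ (m1 + m - 1) := by
    have hA : 2 * n * q ^ (m1 - 1) * (q - 1) = (2 * t * q ^ (m1 - 1)) * (q ^ m - 1) := by
      rw [htn, ← hNmul]; ring
    have hB : 2 * t * q ^ (m1 + m - 1) = (2 * t * q ^ (m1 - 1)) * q ^ m := by
      rw [← hqm1m]; ring
    rw [hA, hB]
    have hC : 0 < 2 * t * q ^ (m1 - 1) :=
      Nat.mul_pos (Nat.mul_pos (by omega) ht0) (Nat.pow_pos hq0)
    exact mul_lt_mul_of_pos_left (by omega) hC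
  have hw1pos : 0 < 2 * n * q ^ (m1 - 1) * (q - 1) :=
    Nat.mul_pos (Nat.mul_pos (Nat.mul_pos (by omega) hn0) (Nat.pow_pos hq0)) (by omega)
  -- minimum weight
  have hmin : ∀ (a : E1) (b : E), (a, b) ≠ (0, 0) →
      2 * n * q ^ (m1 - 1) * (q - 1) ≤ hammingNorm (cword Kq E1 E ω 1 n a b) := by
    intro a b hab
    by_cases ha : a = 0
    · subst ha
      have hb : b ≠ 0 := fun h => hab (by rw [h])
      rw [hW2 b hb]
      exact le_of_lt hlt
    · rw [hW1 a b ha]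
  -- injectivity
  have hinj : Function.Injective (fun ab : E1 × E => cword Kq E1 E ω 1 n ab.1 ab.2) := by
    intro ab ab' heq
    simp only at heq
    by_contra hne
    have hd : ((ab.1 - ab'.1, ab.2 - ab'.2) : E1 × E) ≠ (0, 0) := by
      intro h
      apply hne
      have h1 : ab.1 = ab'.1 := by
        have := congrArg Prod.fst h; simpa [sub_eq_zero] using this
      have h2 : ab.2 = ab'.2 := by
        have := congrArg Prod.snd h; simpa [sub_eq_zero] using this
      exact Prod.ext h1 h2
    have hzero : cword Kq E1 E ω 1 n (ab.1 - ab'.1) (ab.2 - ab'.2) = fun _ => 0 := by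
      funext z
      rw [hsubl, congrFun heq z, sub_self]
    have h0 : hammingNorm (cword Kq E1 E ω 1 n (ab.1 - ab'.1) (ab.2 - ab'.2)) = 0 := by
      rw [hzero]; simp [hammingNorm]
    have := hmin _ _ hd
    omega
  -- bullet 4 set
  have hset1 : (Finset.univ.filter fun ab : E1 × E =>
      hammingNorm (cword Kq E1 E ω 1 n ab.1 ab.2) = 2 * n * q ^ (m1 - 1) * (q - 1))
      = (Finset.univ.filter fun a : E1 => a ≠ 0) ×ˢ (Finset.univ : Finset E) := by
    ext ⟨a, b⟩
    simp only [Finset.mem_filter, Finset.mem_univ, true_and, Finset.mem_product, and_true]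
    constructor
    · intro hw
      intro ha0
      subst ha0
      by_cases hb : b = 0
      · subst hb
        rw [hW0] at hw
        omega
      · rw [hW2 b hb] at hw
        omega
    · intro ha
      exact hW1 a b ha
  have hcard1 : ((Finset.univ.filter fun a : E1 => a ≠ 0) ×ˢ
      (Finset.univ : Finset E)).card = q ^ (m1 + m) - q ^ m := by
    rw [Finset.card_product, Finset.filter_ne',
      Finset.card_erase_of_mem (Finset.mem_univ 0), Finset.card_univ, Finset.card_univ,
      hc1, hc, Nat.sub_mul, one_mul, ← pow_add]
  -- bullet 5 rational weight
  have hden : ((q : ℚ) ^ m - 1) ≠ 0 := by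
    have : (1 : ℚ) < (q : ℚ) ^ m := by
      have := hqm1
      push_cast
      exact_mod_cast this
    intro h
    rw [sub_eq_zero] at h
    rw [← h] at this
    exact lt_irrefl _ this
  have hcastN : ((N : ℚ)) * ((q : ℚ) - 1) = (q : ℚ) ^ m - 1 := by
    have := hNmul
    have h1 : ((N * (q - 1) : ℕ) : ℚ) = ((q ^ m - 1 : ℕ) : ℚ) := by rw [this]
    push_cast [Nat.cast_sub (by omega : 1 ≤ q), Nat.cast_sub (by omega : 1 ≤ q ^ m)] at h1
    exact_mod_cast h1
  have hcastn : ((n : ℚ)) = (N : ℚ) * (t : ℚ) := by rw [htn]; push_cast; ring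
  have hR : ((2 * t * q ^ (m1 + m - 1) : ℕ) : ℚ)
      = 2 * n * (q : ℚ) ^ (m1 + m - 1) * ((q : ℚ) - 1) / ((q : ℚ) ^ m - 1) := by
    rw [eq_div_iff hden, ← hcastN]
    push_cast [hcastn]
    ring
  have hset2 : (Finset.univ.filter fun ab : E1 × E =>
      (hammingNorm (cword Kq E1 E ω 1 n ab.1 ab.2) : ℚ) =
        2 * n * (q : ℚ) ^ (m1 + m - 1) * ((q : ℚ) - 1) / ((q : ℚ) ^ m - 1))
      = ({(0 : E1)} : Finset E1) ×ˢ (Finset.univ.filter fun b : E => b ≠ 0) := by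
    ext ⟨a, b⟩
    simp only [Finset.mem_filter, Finset.mem_univ, true_and, Finset.mem_product,
      Finset.mem_singleton]
    constructor
    · intro hw
      rw [← hR] at hw
      by_cases ha : a = 0
      · subst ha
        refine ⟨rfl, ?_⟩
        intro hb
        subst hb
        rw [hW0] at hw
        have : (0 : ℕ) = 2 * t * q ^ (m1 + m - 1) := by exact_mod_cast hw
        have hpos : 0 < 2 * t * q ^ (m1 + m - 1) :=
          Nat.mul_pos (Nat.mul_pos (by omega) ht0) (Nat.pow_pos hq0)
        omega
      · exfalso
        rw [hW1 a b ha] at hw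
        have : 2 * n * q ^ (m1 - 1) * (q - 1) = 2 * t * q ^ (m1 + m - 1) := by exact_mod_cast hw
        omega
    · rintro ⟨rfl, hb⟩
      rw [hW2 b hb, ← hR]
  have hcard2 : (({(0 : E1)} : Finset E1) ×ˢ (Finset.univ.filter fun b : E => b ≠ 0)).card
      = q ^ m - 1 := by
    rw [Finset.card_product, Finset.card_singleton, Finset.filter_ne',
      Finset.card_erase_of_mem (Finset.mem_univ 0), Finset.card_univ, hc, one_mul]
  refine ⟨hcard_idx, hinj, hmin, ?_, ?_⟩
  · rw [hset1]
    exact hcard1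
  · rw [hset2]
    exact hcard2
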